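/- For every n ≥ 1, the identity ∑_{k=0}^{⌊n/2⌋} (n−2k) · (C(n−1, k) − C(n−1, k−1)) = 2^{n−1} holds, where C denotes the binomial coefficient with the convention C(n−1, −1) = 0. -/
import Mathlib


/-- A permutation `π` of `[n]` contains the pattern given by the word `τ` (of length `k`)
if some subsequence of the one-line notation of `π` has the same relative order as `τ`. -/
def PContains {n k : ℕ} (π : Equiv.Perm (Fin n)) (τ : Fin k → ℕ) : Prop :=
  ∃ f : Fin k → Fin n, StrictMono f ∧ ∀ i j : Fin k, τ i < τ j ↔ π (f i) < π (f j)

/-- `π` avoids the pattern `τ`. -/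
def PAvoids {n k : ℕ} (π : Equiv.Perm (Fin n)) (τ : Fin k → ℕ) : Prop :=
  ¬ PContains π τ

/-- The `i`-th entry (1-indexed, values in `1..n`) of the one-line notation of `π`;
`0` if `i` is out of range. -/
def entry {n : ℕ} (π : Equiv.Perm (Fin n)) (i : ℕ) : ℕ :=
  if h : 1 ≤ i ∧ i ≤ n then ((π ⟨i - 1, by omega⟩ : Fin n) : ℕ) + 1 else 0

/-- `i` is a peak of `π`: `2 ≤ i ≤ n-1` and `π_{i-1} < π_i > π_{i+1}`. -/
def IsPeak {n : ℕ} (π : Equiv.Perm (Fin n)) (i : ℕ) : Prop :=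
  2 ≤ i ∧ i + 1 ≤ n ∧ entry π (i - 1) < entry π i ∧ entry π (i + 1) < entry π i

/-- The peak set of `π` (as a set of 1-indexed positions). -/
def peakSet {n : ℕ} (π : Equiv.Perm (Fin n)) : Set ℕ := {i | IsPeak π i}

/-- The reverse of `π`: `(π^r)_i = π_{n+1-i}`. -/
def reversePerm {n : ℕ} (π : Equiv.Perm (Fin n)) : Equiv.Perm (Fin n) :=
  (Fin.revPerm : Equiv.Perm (Fin n)).trans π

lemma aux_tele (a : ℤ) (N m : ℕ) :
    ∑ k ∈ Finset.range (m + 1),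
      (a - 2 * k) *
        ((Nat.choose N k : ℤ) - (if k = 0 then 0 else (Nat.choose N (k - 1) : ℤ)))
      = (a - 2 * m) * Nat.choose N m + 2 * ∑ j ∈ Finset.range m, (Nat.choose N j : ℤ) := by
  induction m with
  | zero => simp
  | succ m ih =>
      rw [Finset.sum_range_succ, ih, Finset.sum_range_succ]
      have h1 : (m + 1 : ℕ) ≠ 0 := by omega
      simp only [h1, if_false, Nat.add_sub_cancel]
      push_cast
      ring

lemma aux_mid (m : ℕ) :
    2 * (∑ j ∈ Finset.range m, Nat.choose (2 * m) j) + Nat.choose (2 * m) m = 4 ^ m := by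
  have h1 : ∑ k ∈ Finset.range (m + 1), Nat.choose (2 * m + 1) k = 4 ^ m :=
    Nat.sum_range_choose_halfway m
  have h2 : ∑ k ∈ Finset.range (m + 1), Nat.choose (2 * m + 1) k
      = 1 + ∑ j ∈ Finset.range m, (Nat.choose (2 * m) j + Nat.choose (2 * m) (j + 1)) := by
    rw [Finset.sum_range_succ' (fun k => Nat.choose (2 * m + 1) k) m]
    simp only [Nat.choose_succ_succ, Nat.choose_zero_right]
    ring
  have h3 : ∑ j ∈ Finset.range m, Nat.choose (2 * m) (j + 1) + 1
      = (∑ j ∈ Finset.range m, Nat.choose (2 * m) j) + Nat.choose (2 * m) m := by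
    have := Finset.sum_range_succ' (fun k => Nat.choose (2 * m) k) m
    rw [Finset.sum_range_succ] at this
    simpa using this.symm
  rw [Finset.sum_add_distrib] at h2
  omega

theorem stmt14 (n : ℕ) (hn : 1 ≤ n) :
    ∑ k ∈ Finset.range (n / 2 + 1),
      ((n : ℤ) - 2 * k) *
        ((Nat.choose (n - 1) k : ℤ) - (if k = 0 then 0 else (Nat.choose (n - 1) (k - 1) : ℤ)))
      = 2 ^ (n - 1) := by
  rcases Nat.even_or_odd n with ⟨m, hm⟩ | ⟨m, hm⟩
  · -- n = 2m, m ≥ 1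
    have hm1 : 1 ≤ m := by omega
    have h2 : n / 2 = m := by omega
    have h3 : n - 1 = 2 * (m - 1) + 1 := by omega
    rw [h2, h3, aux_tele]
    have hz : ((n : ℤ) - 2 * m) = 0 := by omega
    rw [hz, zero_mul, zero_add]
    have h4 : ∑ j ∈ Finset.range m, ((2 * (m - 1) + 1).choose j : ℤ) = 4 ^ (m - 1) := by
      have := Nat.sum_range_choose_halfway (m - 1)
      have hr : m - 1 + 1 = m := by omega
      rw [hr] at this
      exact_mod_cast congrArg (Nat.cast : ℕ → ℤ) this
    rw [h4, show ((4 : ℤ) ^ (m - 1)) = 2 ^ (2 * (m - 1)) by rw [pow_mul]; norm_num]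
    ring
  · -- n = 2m + 1
    have h2 : n / 2 = m := by omega
    have h3 : n - 1 = 2 * m := by omega
    rw [h2, h3, aux_tele]
    have ho : ((n : ℤ) - 2 * m) = 1 := by omega
    rw [ho, one_mul]
    have h5 : ((2 * m).choose m : ℤ) + 2 * ∑ j ∈ Finset.range m, ((2 * m).choose j : ℤ)
        = 4 ^ m := by
      exact_mod_cast congrArg (Nat.cast : ℕ → ℤ)
        (by have := aux_mid m; omega :
          (2 * m).choose m + 2 * (∑ j ∈ Finset.range m, Nat.choose (2 * m) j) = 4 ^ m)
    rw [h5, show ((4 : ℤ) ^ m) = 2 ^ (2 * m) by rw [pow_mul]; norm_num]
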